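/- Let n ≥ 1, α > -n, μ a finite positive Borel measure on the unit sphere S ⊂ ℂⁿ, and u the Poisson–Szegő integral u(z) = ∫_S (1-|z|²)^(n+2α)/|1-z·ζ̄|^(2n+2α) dμ(ζ). Then for every unit vector ζ, lim_{r→1⁻} (1-r)^n u(rζ) = 2^(n+2α) μ({ζ}). -/

import Mathlib

noncomputable instance (n : ℕ) : MeasurableSpace (EuclideanSpace ℂ (Fin n)) := borel _
instance (n : ℕ) : BorelSpace (EuclideanSpace ℂ (Fin n)) := ⟨rfl⟩

theorem stmt19 (n : ℕ) (hn : 1 ≤ n) (a : ℝ) (ha : -(n : ℝ) < a)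
    (μ : MeasureTheory.Measure (Metric.sphere (0 : EuclideanSpace ℂ (Fin n)) 1))
    [MeasureTheory.IsFiniteMeasure μ]
    (u : EuclideanSpace ℂ (Fin n) → ℝ)
    (hu : ∀ z, ‖z‖ < 1 →
      u z = ∫ ξ, (1 - ‖z‖ ^ 2) ^ ((n : ℝ) + 2 * a) /
        (‖1 - inner (𝕜 := ℂ) (ξ : EuclideanSpace ℂ (Fin n)) z‖) ^ (2 * (n : ℝ) + 2 * a) ∂μ)
    (ζ : Metric.sphere (0 : EuclideanSpace ℂ (Fin n)) 1) :
    Filter.Tendsto (fun r : ℝ => (1 - r) ^ (n : ℝ) * u (r • (ζ : EuclideanSpace ℂ (Fin n))))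
      (nhdsWithin 1 (Set.Iio 1))
      (nhds ((2 : ℝ) ^ ((n : ℝ) + 2 * a) * (μ {ζ}).toReal)) := by
  classical
  have hζ : ‖(ζ : EuclideanSpace ℂ (Fin n))‖ = 1 := norm_eq_of_mem_sphere ζ
  set E1 : ℝ := (n : ℝ) + 2 * a with hE1
  set E2 : ℝ := 2 * (n : ℝ) + 2 * a with hE2
  have hE2pos : 0 < E2 := by
    have : (1:ℝ) ≤ n := by exact_mod_cast hn
    simp only [hE2]; linarith
  set w : Metric.sphere (0 : EuclideanSpace ℂ (Fin n)) 1 → ℂ := fun ξ => inner (𝕜 := ℂ) (ξ : EuclideanSpace ℂ (Fin n)) (ζ : EuclideanSpace ℂ (Fin n)) with hw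
  have hwle : ∀ ξ : Metric.sphere (0 : EuclideanSpace ℂ (Fin n)) 1, ‖w ξ‖ ≤ 1 := by
    intro ξ
    have := norm_inner_le_norm (𝕜 := ℂ) (ξ : EuclideanSpace ℂ (Fin n)) (ζ : EuclideanSpace ℂ (Fin n))
    rw [norm_eq_of_mem_sphere ξ, hζ] at this
    simpa using this
  set G : ℝ → Metric.sphere (0 : EuclideanSpace ℂ (Fin n)) 1 → ℝ := fun r ξ =>
    (1 - r) ^ E2 * (1 + r) ^ E1 / (‖1 - (r : ℂ) * w ξ‖) ^ E2 with hG
  set f : Metric.sphere (0 : EuclideanSpace ℂ (Fin n)) 1 → ℝ := Set.indicator {ζ} (fun _ => (2 : ℝ) ^ E1) with hf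
  have hl : Set.Ioo (0:ℝ) 1 ∈ nhdsWithin (1:ℝ) (Set.Iio 1) :=
    Ioo_mem_nhdsLT_of_mem (by norm_num)
  -- lower bound on denominator
  have hD : ∀ r ∈ Set.Ioo (0:ℝ) 1, ∀ ξ : Metric.sphere (0 : EuclideanSpace ℂ (Fin n)) 1,
      1 - r ≤ ‖1 - (r : ℂ) * w ξ‖ := by
    intro r hr ξ
    have h1 : ‖(1 : ℂ)‖ - ‖(r : ℂ) * w ξ‖ ≤ ‖1 - (r : ℂ) * w ξ‖ := norm_sub_norm_le _ _
    have h2 : ‖(r : ℂ) * w ξ‖ ≤ r := by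
      rw [norm_mul, Complex.norm_real, Real.norm_eq_abs, abs_of_pos hr.1]
      calc r * ‖w ξ‖ ≤ r * 1 := by
            exact mul_le_mul_of_nonneg_left (by simpa using hwle ξ) hr.1.le
        _ = r := mul_one r
    have : ‖(1:ℂ)‖ = 1 := by simp
    linarith [h1, h2, this ▸ h1]
  -- measurability
  have hGmeas : ∀ r ∈ Set.Ioo (0:ℝ) 1, MeasureTheory.AEStronglyMeasurable (G r) μ := by
    intro r hr
    apply Continuous.aestronglyMeasurable
    apply Continuous.div continuous_const
    · apply Continuous.rpow_const
      · exact continuous_norm.comp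
          (continuous_const.sub (continuous_const.mul
            (continuous_subtype_val.inner continuous_const)))
      · intro x; exact Or.inr hE2pos.le
    · intro ξ
      have := hD r hr ξ
      have h0 : (0:ℝ) < ‖1 - (r : ℂ) * w ξ‖ := lt_of_lt_of_le (by linarith [hr.2]) this
      exact ne_of_gt (Real.rpow_pos_of_pos h0 _)
  -- bound
  have hbound : ∀ r ∈ Set.Ioo (0:ℝ) 1, ∀ ξ : Metric.sphere (0 : EuclideanSpace ℂ (Fin n)) 1,
      ‖G r ξ‖ ≤ max ((2:ℝ) ^ E1) 1 := by
    intro r hr ξ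
    have hr1 : (0:ℝ) < 1 - r := by linarith [hr.2]
    have hDξ := hD r hr ξ
    have hDpos : (0:ℝ) < ‖1 - (r : ℂ) * w ξ‖ := lt_of_lt_of_le hr1 hDξ
    have hnum : (1 - r) ^ E2 ≤ (‖1 - (r : ℂ) * w ξ‖) ^ E2 :=
      Real.rpow_le_rpow hr1.le hDξ hE2pos.le
    have hGnonneg : 0 ≤ G r ξ := by
      apply div_nonneg
      · exact mul_nonneg (Real.rpow_nonneg hr1.le _) (Real.rpow_nonneg (by linarith [hr.1]) _)
      · exact Real.rpow_nonneg (norm_nonneg _) _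
    rw [Real.norm_eq_abs, abs_of_nonneg hGnonneg]
    have hDE2pos : (0:ℝ) < (‖1 - (r : ℂ) * w ξ‖) ^ E2 :=
      Real.rpow_pos_of_pos hDpos _
    have step1 : G r ξ ≤ (1 + r) ^ E1 := by
      simp only [hG]
      rw [div_le_iff₀ hDE2pos]
      calc (1 - r) ^ E2 * (1 + r) ^ E1
          ≤ (‖1 - (r : ℂ) * w ξ‖) ^ E2 * (1 + r) ^ E1 :=
            mul_le_mul_of_nonneg_right hnum (Real.rpow_nonneg (by linarith [hr.1]) _)
        _ = (1 + r) ^ E1 * (‖1 - (r : ℂ) * w ξ‖) ^ E2 := mul_comm _ _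
    refine step1.trans ?_
    rcases le_or_gt 0 E1 with hE1n | hE1n
    · exact le_max_of_le_left (Real.rpow_le_rpow (by linarith [hr.1]) (by linarith [hr.2]) hE1n)
    · exact le_max_of_le_right (Real.rpow_le_one_of_one_le_of_nonpos (by linarith [hr.1]) hE1n.le)
  -- pointwise limit
  have hlim : ∀ ξ : Metric.sphere (0 : EuclideanSpace ℂ (Fin n)) 1, Filter.Tendsto (fun r => G r ξ) (nhdsWithin 1 (Set.Iio 1)) (nhds (f ξ)) := by
    intro ξ
    by_cases hξ : ξ = ζ
    · subst hξ
      have hwζ : w ξ = 1 := by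
        rw [hw]
        simp only []
        rw [inner_self_eq_norm_sq_to_K]
        rw [norm_eq_of_mem_sphere ξ]
        norm_num
      have hfξ : f ξ = (2:ℝ) ^ E1 := by
        simp [hf]
      rw [hfξ]
      have heq : ∀ r ∈ Set.Ioo (0:ℝ) 1, G r ξ = (1 + r) ^ E1 := by
        intro r hr
        have hr1 : (0:ℝ) < 1 - r := by linarith [hr.2]
        simp only [hG, hwζ, mul_one]
        have : (1 : ℂ) - (r : ℂ) = ((1 - r : ℝ) : ℂ) := by push_cast; ring
        rw [this, Complex.norm_real, Real.norm_eq_abs, abs_of_pos hr1]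
        exact mul_div_cancel_left₀ _ (ne_of_gt (Real.rpow_pos_of_pos hr1 (E2)))
      have htend : Filter.Tendsto (fun r : ℝ => (1 + r) ^ E1) (nhdsWithin 1 (Set.Iio 1))
          (nhds ((2:ℝ) ^ E1)) := by
        have h1 : Filter.Tendsto (fun r : ℝ => 1 + r) (nhdsWithin 1 (Set.Iio 1)) (nhds 2) := by
          have h0 : Filter.Tendsto (fun r : ℝ => 1 + r) (nhds (1:ℝ)) (nhds (1+1)) :=
            tendsto_const_nhds.add Filter.tendsto_id
          have : Filter.Tendsto (fun r : ℝ => 1 + r) (nhds (1:ℝ)) (nhds 2) := by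
            convert h0 using 2; norm_num
          exact this.mono_left nhdsWithin_le_nhds
        exact h1.rpow_const (Or.inl (by norm_num))
      exact htend.congr' (by filter_upwards [hl] with r hr using (heq r hr).symm)
    · have hfξ : f ξ = 0 := by
        rw [hf]; exact Set.indicator_of_notMem (by simpa using hξ) _
      rw [hfξ]
      have hw1 : w ξ ≠ 1 := by
        intro h
        exact hξ (Subtype.coe_injective
          ((inner_eq_one_iff_of_norm_eq_one (norm_eq_of_mem_sphere ξ) hζ).mp h))
      have hden0 : ‖1 - w ξ‖ ≠ 0 := by
        simp only [ne_eq, norm_eq_zero, sub_eq_zero]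
        exact fun h => hw1 h.symm
      have h1 : Filter.Tendsto (fun r : ℝ => (1 - r) ^ E2) (nhdsWithin 1 (Set.Iio 1)) (nhds 0) := by
        have h0 : Filter.Tendsto (fun r : ℝ => 1 - r) (nhdsWithin 1 (Set.Iio 1)) (nhds 0) := by
          have h0' : Filter.Tendsto (fun r : ℝ => 1 - r) (nhds (1:ℝ)) (nhds (1-1)) :=
            tendsto_const_nhds.sub Filter.tendsto_id
          have : Filter.Tendsto (fun r : ℝ => 1 - r) (nhds (1:ℝ)) (nhds 0) := by
            convert h0' using 2; norm_num
          exact this.mono_left nhdsWithin_le_nhds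
        have := h0.rpow_const (Or.inr hE2pos.le)
        simpa [Real.zero_rpow (ne_of_gt hE2pos)] using this
      have h2 : Filter.Tendsto (fun r : ℝ => (1 + r) ^ E1) (nhdsWithin 1 (Set.Iio 1))
          (nhds ((2:ℝ) ^ E1)) := by
        have h0 : Filter.Tendsto (fun r : ℝ => 1 + r) (nhdsWithin 1 (Set.Iio 1)) (nhds 2) := by
          have h0 : Filter.Tendsto (fun r : ℝ => 1 + r) (nhds (1:ℝ)) (nhds (1+1)) :=
            tendsto_const_nhds.add Filter.tendsto_id
          have : Filter.Tendsto (fun r : ℝ => 1 + r) (nhds (1:ℝ)) (nhds 2) := by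
            convert h0 using 2; norm_num
          exact this.mono_left nhdsWithin_le_nhds
        exact h0.rpow_const (Or.inl (by norm_num))
      have h3 : Filter.Tendsto (fun r : ℝ => (‖1 - (r : ℂ) * w ξ‖) ^ E2)
          (nhdsWithin 1 (Set.Iio 1)) (nhds ((‖1 - w ξ‖) ^ E2)) := by
        have h0 : Filter.Tendsto (fun r : ℝ => ‖1 - (r : ℂ) * w ξ‖) (nhds 1)
            (nhds (‖1 - w ξ‖)) := by
          have hc : Continuous fun r : ℝ => ‖1 - (r : ℂ) * w ξ‖ :=
            continuous_norm.comp
              (continuous_const.sub (Complex.continuous_ofReal.mul continuous_const))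
          have := hc.tendsto (1:ℝ)
          simpa using this
        exact (h0.mono_left nhdsWithin_le_nhds).rpow_const (Or.inl hden0)
      have := ((h1.mul h2).div h3 (ne_of_gt (Real.rpow_pos_of_pos
        (lt_of_le_of_ne (norm_nonneg _) (Ne.symm hden0)) _)))
      rw [zero_mul, zero_div] at this
      exact this
  -- integral of f
  have hsing : MeasurableSet ({ζ} : Set (Metric.sphere (0 : EuclideanSpace ℂ (Fin n)) 1)) := measurableSet_singleton ζ
  have hintf : ∫ ξ, f ξ ∂μ = (2 : ℝ) ^ E1 * (μ {ζ}).toReal := by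
    rw [hf, MeasureTheory.integral_indicator_const _ hsing, smul_eq_mul, mul_comm, MeasureTheory.measureReal_def]
  -- DCT
  have hDCT : Filter.Tendsto (fun r => ∫ ξ, G r ξ ∂μ) (nhdsWithin 1 (Set.Iio 1))
      (nhds ((2 : ℝ) ^ E1 * (μ {ζ}).toReal)) := by
    rw [← hintf]
    refine MeasureTheory.tendsto_integral_filter_of_dominated_convergence
      (fun _ => max ((2:ℝ) ^ E1) 1) ?_ ?_ ?_ ?_
    · filter_upwards [hl] with r hr using hGmeas r hr
    · filter_upwards [hl] with r hr
      exact Filter.Eventually.of_forall (hbound r hr)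
    · exact MeasureTheory.integrable_const _
    · exact Filter.Eventually.of_forall hlim
  -- eventual equality
  refine hDCT.congr' ?_
  filter_upwards [hl] with r hr
  have hr0 : (0:ℝ) < r := hr.1
  have hr1 : r < 1 := hr.2
  have hnorm : ‖r • (ζ : EuclideanSpace ℂ (Fin n))‖ = r := by
    rw [norm_smul, Real.norm_eq_abs, abs_of_pos hr0, hζ, mul_one]
  have hulen : ‖r • (ζ : EuclideanSpace ℂ (Fin n))‖ < 1 := by rw [hnorm]; exact hr1
  have hinner : ∀ ξ : Metric.sphere (0 : EuclideanSpace ℂ (Fin n)) 1, (inner (𝕜 := ℂ) (ξ : EuclideanSpace ℂ (Fin n)) (r • (ζ : EuclideanSpace ℂ (Fin n))) : ℂ) = (r : ℂ) * w ξ := by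
    intro ξ
    have hs : r • (ζ : EuclideanSpace ℂ (Fin n)) = ((r : ℂ)) • (ζ : EuclideanSpace ℂ (Fin n)) := by
      rw [← Complex.coe_smul]
    rw [hs, inner_smul_right]
  rw [hu _ hulen, ← MeasureTheory.integral_const_mul]
  apply MeasureTheory.integral_congr_ae
  apply Filter.Eventually.of_forall
  intro ξ
  simp only [hG, hnorm, hinner ξ]
  have h12 : (1:ℝ) - r ^ 2 = (1 - r) * (1 + r) := by ring
  have hr1' : (0:ℝ) < 1 - r := by linarith
  rw [h12, Real.mul_rpow hr1'.le (by linarith)]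
  have hsplit : (1 - r) ^ E2 = (1 - r) ^ (n:ℝ) * (1 - r) ^ E1 := by
    rw [← Real.rpow_add hr1']
    congr 1
    rw [hE1, hE2]; ring
  rw [hsplit]
  ring
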